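/- Let G be a finite group with commutator subgroup G' ≅ Z_p × Z_q (p, q distinct primes), suppose |G| is odd, and let π₁, π₂, π₃ ∈ G' be three elements such that for all 1 ≤ i < j ≤ 3 the element πᵢ⁻¹πⱼ generates G'. Then for every γ ∈ G' there exists some i with ⟨γ·πᵢ⟩ = G'. -/
import Mathlib

lemma key_aux {G : Type*} [Group G] {a b : G} {n r : ℕ} (hr0 : 0 < r) (hr : r < n)
    (hc : Commute a b) (hab : orderOf (a⁻¹ * b) = n) (ha : a ^ r = 1) (hb : b ^ r = 1) :
    False := by
  have h1 : (a⁻¹ * b) ^ r = 1 := by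
    rw [hc.inv_left.mul_pow, inv_pow, ha, hb, inv_one, one_mul]
  have h2 := orderOf_dvd_of_pow_eq_one h1
  rw [hab] at h2
  exact absurd (Nat.le_of_dvd hr0 h2) (not_le.mpr hr)

/-- If `|G|` is odd, `G' ≅ Z_p × Z_q` (`p ≠ q` primes) and `π₁, π₂, π₃ ∈ G'` are such
that each pairwise difference `πᵢ⁻¹πⱼ` generates `G'`, then for every `γ ∈ G'` some
`γ·πᵢ` generates `G'`. -/
theorem stmt_10 {G : Type*} [Group G] [Finite G]
    (hodd : Odd (Nat.card G)) (p q : ℕ) (hp : p.Prime) (hq : q.Prime) (hpq : p ≠ q)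
    (hcard : Nat.card (commutator G) = p * q)
    (π₁ π₂ π₃ : G) (h₁ : π₁ ∈ commutator G) (h₂ : π₂ ∈ commutator G)
    (h₃ : π₃ ∈ commutator G)
    (h12 : Subgroup.zpowers (π₁⁻¹ * π₂) = commutator G)
    (h13 : Subgroup.zpowers (π₁⁻¹ * π₃) = commutator G)
    (h23 : Subgroup.zpowers (π₂⁻¹ * π₃) = commutator G) :
    ∀ γ ∈ commutator G,
      Subgroup.zpowers (γ * π₁) = commutator G ∨
      Subgroup.zpowers (γ * π₂) = commutator G ∨
      Subgroup.zpowers (γ * π₃) = commutator G := by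
  intro γ hγ
  have hg12 : orderOf (π₁⁻¹ * π₂) = p * q := by
    rw [← Nat.card_zpowers, h12, hcard]
  have hg13 : orderOf (π₁⁻¹ * π₃) = p * q := by
    rw [← Nat.card_zpowers, h13, hcard]
  have hg23 : orderOf (π₂⁻¹ * π₃) = p * q := by
    rw [← Nat.card_zpowers, h23, hcard]
  -- commutativity of elements of the commutator subgroup (it is cyclic)
  have hcomm : ∀ x ∈ commutator G, ∀ y ∈ commutator G, Commute x y := by
    intro x hx y hy
    rw [← h12, Subgroup.mem_zpowers_iff] at hx hy
    obtain ⟨m, rfl⟩ := hx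
    obtain ⟨n, rfl⟩ := hy
    exact (Commute.refl _).zpow_zpow m n
  -- non-generators satisfy x^p = 1 or x^q = 1
  have key2 : ∀ x ∈ commutator G, Subgroup.zpowers x ≠ commutator G →
      x ^ p = 1 ∨ x ^ q = 1 := by
    intro x hx hne
    have hle : Subgroup.zpowers x ≤ commutator G := Subgroup.zpowers_le.mpr hx
    have hdvd : orderOf x ∣ p * q := by
      have := Subgroup.card_dvd_of_le hle
      rwa [Nat.card_zpowers, hcard] at this
    have hneq : orderOf x ≠ p * q := by
      intro h
      apply hne
      apply Subgroup.eq_of_le_of_card_ge hle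
      rw [Nat.card_zpowers, hcard, h]
    by_cases hqd : q ∣ orderOf x
    · right
      have hpd : ¬ p ∣ orderOf x := by
        intro hpd
        exact hneq (Nat.dvd_antisymm hdvd
          (Nat.Coprime.mul_dvd_of_dvd_of_dvd
            (Nat.coprime_primes hp hq |>.mpr hpq) hpd hqd))
      have hco : Nat.Coprime (orderOf x) p :=
        Nat.coprime_comm.mp (hp.coprime_iff_not_dvd.mpr hpd)
      rw [← orderOf_dvd_iff_pow_eq_one]
      exact hco.dvd_of_dvd_mul_left hdvd
    · left
      have hco : Nat.Coprime (orderOf x) q :=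
        Nat.coprime_comm.mp (hq.coprime_iff_not_dvd.mpr hqd)
      rw [← orderOf_dvd_iff_pow_eq_one]
      exact hco.dvd_of_dvd_mul_right hdvd
  by_contra hcon
  push_neg at hcon
  obtain ⟨hn1, hn2, hn3⟩ := hcon
  have m1 : γ * π₁ ∈ commutator G := mul_mem hγ h₁
  have m2 : γ * π₂ ∈ commutator G := mul_mem hγ h₂
  have m3 : γ * π₃ ∈ commutator G := mul_mem hγ h₃
  have c12 : Commute (γ * π₁) (γ * π₂) := hcomm _ m1 _ m2
  have c13 : Commute (γ * π₁) (γ * π₃) := hcomm _ m1 _ m3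
  have c23 : Commute (γ * π₂) (γ * π₃) := hcomm _ m2 _ m3
  have e12 : (γ * π₁)⁻¹ * (γ * π₂) = π₁⁻¹ * π₂ := by group
  have e13 : (γ * π₁)⁻¹ * (γ * π₃) = π₁⁻¹ * π₃ := by group
  have e23 : (γ * π₂)⁻¹ * (γ * π₃) = π₂⁻¹ * π₃ := by group
  have o12 : orderOf ((γ * π₁)⁻¹ * (γ * π₂)) = p * q := by rw [e12]; exact hg12
  have o13 : orderOf ((γ * π₁)⁻¹ * (γ * π₃)) = p * q := by rw [e13]; exact hg13
  have o23 : orderOf ((γ * π₂)⁻¹ * (γ * π₃)) = p * q := by rw [e23]; exact hg23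
  have hp0 : 0 < p := hp.pos
  have hq0 : 0 < q := hq.pos
  have hplt : p < p * q := lt_mul_of_one_lt_right hp0 hq.one_lt
  have hqlt : q < p * q := lt_mul_of_one_lt_left hq0 hp.one_lt
  rcases key2 _ m1 hn1 with ha | ha <;>
  rcases key2 _ m2 hn2 with hb | hb <;>
  rcases key2 _ m3 hn3 with hc | hc <;>
  first
    | exact key_aux hp0 hplt c12 o12 ha hb
    | exact key_aux hq0 hqlt c12 o12 ha hb
    | exact key_aux hp0 hplt c13 o13 ha hc
    | exact key_aux hq0 hqlt c13 o13 ha hc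
    | exact key_aux hp0 hplt c23 o23 hb hc
    | exact key_aux hq0 hqlt c23 o23 hb hc
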